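/- Let (X,ν) be a standard Borel probability space, f: X → X an invertible measure-preserving ergodic transformation, M a compact metric space, and φ: X → Homeo(M) measurable; let F(x,p) = (f(x), φ_x(p)) be the skew product on X×M, and let μ be an F-invariant ergodic Borel probability measure on X×M whose projection to X is ν, with fiberwise disintegration {μ_x}. Assume that for ν-a.e. x, (φ_x)_*μ_x = μ_{f(x)}. If the set B = {x ∈ X : μ_x has an atom, i.e. ∃p ∈ M with μ_x({p}) > 0} satisfies ν(B) > 0, then there exist an integer k ≥ 1 and a measurable set S ⊆ X×M with μ(S) = 1 such that for every (x,p) ∈ S, the fiber S_x = {q ∈ M : (x,q) ∈ S} has exactly k elements and μ_x({q}) = 1/k for every q ∈ S_x. -/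

import Mathlib

open MeasureTheory Set ProbabilityTheory
open scoped ENNReal

lemma my_conull {X : Type*} [MeasurableSpace X] {ν : Measure X} [IsProbabilityMeasure ν]
    {P : X → Prop} (h : ∀ᵐ x ∂ν, P x) :
    ∃ N : Set X, MeasurableSet N ∧ ν N = 1 ∧ ∀ x ∈ N, P x := by
  refine ⟨(toMeasurable ν {x | ¬ P x})ᶜ, (measurableSet_toMeasurable ν _).compl, ?_, ?_⟩
  · rw [prob_compl_eq_one_iff (measurableSet_toMeasurable ν _), measure_toMeasurable]
    exact h
  · intro x hx
    by_contra hPx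
    exact hx (subset_toMeasurable ν _ hPx)

lemma my_countable_generatePiSystem {α : Type*} {S : Set (Set α)} (hS : S.Countable) :
    (generatePiSystem S).Countable := by
  have hsub : generatePiSystem S ⊆ (fun T => ⋂₀ T) '' {T : Set (Set α) | T.Finite ∧ T ⊆ S} := by
    intro s hs
    induction hs with
    | base h => exact ⟨{_}, ⟨finite_singleton _, singleton_subset_iff.2 h⟩, sInter_singleton _⟩
    | inter hs ht hne ihs iht =>
      obtain ⟨T1, ⟨hT1f, hT1s⟩, rfl⟩ := ihs
      obtain ⟨T2, ⟨hT2f, hT2s⟩, rfl⟩ := iht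
      exact ⟨T1 ∪ T2, ⟨hT1f.union hT2f, union_subset hT1s hT2s⟩, sInter_union T1 T2⟩
  exact ((countable_setOf_finite_subset hS).image _).mono hsub

lemma my_count_atoms {M : Type*} [MeasurableSpace M] [MeasurableSingletonClass M]
    (ρ : Measure M) [IsProbabilityMeasure ρ] {c : ℝ≥0∞} (hc : c ≠ 0)
    (h1 : ρ {p | ρ {p} = c} = 1) :
    ∃ n : ℕ, {p | ρ {p} = c}.encard = n ∧ (n : ℝ≥0∞) * c = 1 := by
  set D := {p | ρ {p} = c} with hD
  have hne : D.Nonempty := by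
    rcases D.eq_empty_or_nonempty with h | h
    · rw [h] at h1; simp at h1
    · exact h
  obtain ⟨p₀, hp₀⟩ := hne
  have hc1 : c ≤ 1 := hp₀ ▸ prob_le_one
  have hctop : c ≠ ⊤ := (hc1.trans_lt ENNReal.one_lt_top).ne
  have hsum : ∀ t : Finset M, ↑t ⊆ D → ρ ↑t = t.card * c := by
    intro t htD
    have hd : (↑t : Set M).PairwiseDisjoint (fun p => ({p} : Set M)) := by
      intro a _ b _ hab
      simpa using hab
    have : ρ (⋃ p ∈ t, ({p} : Set M)) = ∑ p ∈ t, ρ {p} :=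
      measure_biUnion_finset hd fun b _ => measurableSet_singleton b
    have hco : (⋃ p ∈ t, ({p} : Set M)) = ↑t := by ext q; simp
    rw [hco] at this
    rw [this, Finset.sum_congr rfl fun p hp => htD hp, Finset.sum_const, nsmul_eq_mul]
  have hfin : D.Finite := by
    by_contra hfin
    have hinf : D.Infinite := hfin
    obtain ⟨n, hn⟩ := ENNReal.exists_nat_gt (ENNReal.inv_ne_top.2 hc)
    obtain ⟨t, hts, htcard⟩ := hinf.exists_subset_card_eq n
    have h2 : (1 : ℝ≥0∞) < n * c := by
      calc (1 : ℝ≥0∞) = c⁻¹ * c := (ENNReal.inv_mul_cancel hc hctop).symm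
      _ < n * c := by exact ENNReal.mul_lt_mul_left hc hctop hn
    have := hsum t hts
    rw [htcard] at this
    exact absurd (this ▸ prob_le_one (μ := ρ) (s := ↑t)) (by exact not_le.2 h2)
  refine ⟨hfin.toFinset.card, ?_, ?_⟩
  · exact hfin.encard_eq_coe_toFinset_card
  · have := hsum hfin.toFinset (by simp)
    rw [hfin.coe_toFinset] at this
    rw [← this, h1]

lemma my_sandwich {α : Type*} [MeasurableSpace α] (ν : Measure α) [IsProbabilityMeasure ν]
    {h g : α → ℝ≥0∞} (hg : Measurable g) (hh1 : ∀ x, h x ≤ 1) (hg1 : ∀ x, g x ≤ 1)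
    (heq : ∀ s : Set α, MeasurableSet s → ∫⁻ x in s, h x ∂ν = ∫⁻ x in s, g x ∂ν)
    (hcompl : ∫⁻ x, (1 - h x) ∂ν = ∫⁻ x, (1 - g x) ∂ν) : h =ᵐ[ν] g := by
  obtain ⟨ψ, hψm, hψle, hψeq⟩ := exists_measurable_le_lintegral_eq ν h
  obtain ⟨ψ', hψ'm, hψ'le, hψ'eq⟩ := exists_measurable_le_lintegral_eq ν (fun x => 1 - h x)
  set χ := fun x => 1 - ψ' x with hχ
  have hχm : Measurable χ := measurable_const.sub hψ'm
  have hψ'1 : ∀ x, ψ' x ≤ 1 := fun x => (hψ'le x).trans tsub_le_self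
  have hhχ : ∀ x, h x ≤ χ x := fun x =>
    ENNReal.le_sub_of_add_le_left ((hψ'1 x).trans_lt ENNReal.one_lt_top).ne (by
      calc ψ' x + h x ≤ (1 - h x) + h x := add_le_add (hψ'le x) le_rfl
      _ = 1 := tsub_add_cancel_of_le (hh1 x))
  have hψχ : ∀ x, ψ x ≤ χ x := fun x => (hψle x).trans (hhχ x)
  have hg_int : ∫⁻ x, g x ∂ν ≤ 1 := by
    calc ∫⁻ x, g x ∂ν ≤ ∫⁻ _, 1 ∂ν := lintegral_mono hg1
    _ = 1 := by simp
  have hψ'_int : ∫⁻ x, ψ' x ∂ν ≤ 1 := by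
    calc ∫⁻ x, ψ' x ∂ν ≤ ∫⁻ _, 1 ∂ν := lintegral_mono hψ'1
    _ = 1 := by simp
  have huniv : ∫⁻ x, h x ∂ν = ∫⁻ x, g x ∂ν := by
    simpa using heq univ MeasurableSet.univ
  have hsub1 : ∫⁻ x, (1 - g x) ∂ν = 1 - ∫⁻ x, g x ∂ν := by
    have := lintegral_sub hg (hg_int.trans_lt ENNReal.one_lt_top).ne
      (Filter.Eventually.of_forall hg1) (μ := ν) (f := fun _ => 1)
    simpa using this
  have hψ'val : ∫⁻ x, ψ' x ∂ν = 1 - ∫⁻ x, g x ∂ν := by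
    rw [← hψ'eq, hcompl, hsub1]
  have hχval : ∫⁻ x, χ x ∂ν = ∫⁻ x, g x ∂ν := by
    have := lintegral_sub hψ'm (hψ'_int.trans_lt ENNReal.one_lt_top).ne
      (Filter.Eventually.of_forall hψ'1) (μ := ν) (f := fun _ => 1)
    simp only [hχ]
    rw [this, hψ'val]
    simp only [lintegral_one, measure_univ, mul_one]
    exact ENNReal.sub_sub_cancel ENNReal.one_ne_top hg_int
  have hψval : ∫⁻ x, ψ x ∂ν = ∫⁻ x, g x ∂ν := by rw [← hψeq, huniv]
  have hψ_int : ∫⁻ x, ψ x ∂ν ≠ ⊤ := by rw [hψval]; exact (hg_int.trans_lt ENNReal.one_lt_top).ne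
  have hdiff : ∫⁻ x, (χ x - ψ x) ∂ν = 0 := by
    rw [lintegral_sub hψm hψ_int (Filter.Eventually.of_forall hψχ), hχval, hψval, tsub_self]
  have hχψ : ∀ᵐ x ∂ν, χ x - ψ x = 0 := (lintegral_eq_zero_iff (hχm.sub hψm)).1 hdiff
  have hhψ : h =ᵐ[ν] ψ := by
    filter_upwards [hχψ] with x hx
    have hle : χ x ≤ ψ x := tsub_eq_zero_iff_le.1 hx
    exact le_antisymm ((hhχ x).trans hle) (hψle x)
  have hψg : ψ =ᵐ[ν] g := by
    refine ae_eq_of_forall_setLIntegral_eq_of_sigmaFinite hψm hg fun s hs _ => ?_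
    rw [← heq s hs]
    exact lintegral_congr_ae (ae_restrict_of_ae hhψ.symm)
  exact hhψ.trans hψg

lemma my_eq_condKernel
    {X : Type*} [MeasurableSpace X]
    {M : Type*} [MeasurableSpace M] [StandardBorelSpace M] [Nonempty M]
    [MeasurableSpace.CountablyGenerated M]
    (ν : Measure X) [IsProbabilityMeasure ν]
    (μ : Measure (X × M)) [IsProbabilityMeasure μ]
    (hproj : μ.map Prod.fst = ν)
    (μx : X → Measure M) (hμxprob : ∀ x, IsProbabilityMeasure (μx x))
    (hdisint : ∀ E : Set (X × M), MeasurableSet E →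
      μ E = ∫⁻ x, μx x {p | (x, p) ∈ E} ∂ν) :
    ∀ᵐ x ∂ν, μx x = μ.condKernel x := by
  have hfst : μ.fst = ν := hproj
  have keyμx : ∀ (s : Set X), MeasurableSet s → ∀ (A : Set M), MeasurableSet A →
      ∫⁻ x in s, μx x A ∂ν = μ (s ×ˢ A) := by
    intro s hs A hA
    rw [hdisint (s ×ˢ A) (hs.prod hA)]
    have : ∀ x, μx x {p | (x, p) ∈ s ×ˢ A} = s.indicator (fun x => μx x A) x := by
      intro x
      by_cases hx : x ∈ s <;> simp [Set.indicator, hx, Set.mem_prod]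
    rw [lintegral_congr this, lintegral_indicator hs]
  have keyκ : ∀ (s : Set X), MeasurableSet s → ∀ (A : Set M), MeasurableSet A →
      ∫⁻ x in s, μ.condKernel x A ∂ν = μ (s ×ˢ A) := by
    intro s hs A hA
    rw [← hfst]
    exact Measure.setLIntegral_condKernel_eq_measure_prod hs hA
  have perSet : ∀ (A : Set M), MeasurableSet A →
      ∀ᵐ x ∂ν, μx x A = μ.condKernel x A := by
    intro A hA
    refine my_sandwich ν (ProbabilityTheory.Kernel.measurable_coe _ hA)
      (fun x => by haveI := hμxprob x; exact prob_le_one)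
      (fun x => prob_le_one) (fun s hs => (keyμx s hs A hA).trans (keyκ s hs A hA).symm) ?_
    have c1 : ∫⁻ x, (1 - μx x A) ∂ν = μ (univ ×ˢ Aᶜ) := by
      rw [← keyμx univ MeasurableSet.univ Aᶜ hA.compl, Measure.restrict_univ]
      refine lintegral_congr fun x => ?_
      haveI := hμxprob x
      rw [measure_compl hA (measure_ne_top _ _), measure_univ]
    have c2 : ∫⁻ x, (1 - μ.condKernel x A) ∂ν = μ (univ ×ˢ Aᶜ) := by
      rw [← keyκ univ MeasurableSet.univ Aᶜ hA.compl, Measure.restrict_univ]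
      refine lintegral_congr fun x => ?_
      rw [measure_compl hA (measure_ne_top _ _), measure_univ]
    rw [c1, c2]
  set C := generatePiSystem (MeasurableSpace.countableGeneratingSet M) with hC
  have hCcount : C.Countable :=
    my_countable_generatePiSystem MeasurableSpace.countable_countableGeneratingSet
  have hCpi : IsPiSystem C := isPiSystem_generatePiSystem _
  have h_eq : (inferInstance : MeasurableSpace M) = MeasurableSpace.generateFrom C := by
    rw [hC, generateFrom_generatePiSystem_eq,
      MeasurableSpace.generateFrom_countableGeneratingSet]
  have main : ∀ᵐ x ∂ν, ∀ ⦃t : Set M⦄, MeasurableSet t → μx x t = μ.condKernel x t := by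
    refine MeasurableSpace.ae_induction_on_inter h_eq hCpi ?_ ?_ ?_ ?_
    · exact Filter.Eventually.of_forall fun x => by simp
    · refine (ae_ball_iff hCcount).2 fun t ht => ?_
      exact perSet t (generatePiSystem_measurableSet (t := t)
        (fun s hs => MeasurableSpace.measurableSet_countableGeneratingSet hs) ht)
    · refine Filter.Eventually.of_forall fun x t ht heqt => ?_
      haveI := hμxprob x
      rw [measure_compl ht (measure_ne_top _ _), measure_compl ht (measure_ne_top _ _),
        heqt, measure_univ, measure_univ]
    · refine Filter.Eventually.of_forall fun x F hdisj hFm hFeq => ?_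
      rw [measure_iUnion hdisj hFm, measure_iUnion hdisj hFm]
      exact tsum_congr hFeq
  filter_upwards [main] with x hx
  exact Measure.ext fun t ht => hx ht

/-- **Reduction step in Theorem II.** For a skew product over an invertible ergodic base
with an invariant ergodic measure: if the fiber measures have atoms over a positive-measure
set of base points, then there is a full-measure set meeting a.e. fiber in exactly `k`
points, each of which is an atom of weight `1/k`. -/
theorem theoremII_reduction_atoms
    {X : Type*} [MeasurableSpace X] [StandardBorelSpace X]
    (ν : Measure X) [IsProbabilityMeasure ν]
    (f : X → X) (hf : MeasurePreserving f ν ν) (hfbij : Function.Bijective f)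
    (hferg : Ergodic f ν)
    {M : Type*} [MetricSpace M] [CompactSpace M] [MeasurableSpace M] [BorelSpace M]
    (φ : X → M → M)
    (hφcont : ∀ x, Continuous (φ x)) (hφbij : ∀ x, Function.Bijective (φ x))
    (hφmeas : Measurable fun z : X × M => φ z.1 z.2)
    (μ : Measure (X × M)) [IsProbabilityMeasure μ]
    (hFinv : MeasurePreserving (fun z : X × M => (f z.1, φ z.1 z.2)) μ μ)
    (hFerg : Ergodic (fun z : X × M => (f z.1, φ z.1 z.2)) μ)
    (hproj : μ.map Prod.fst = ν)
    (μx : X → Measure M) (hμxprob : ∀ x, IsProbabilityMeasure (μx x))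
    (hdisint : ∀ E : Set (X × M), MeasurableSet E →
      μ E = ∫⁻ x, μx x {p | (x, p) ∈ E} ∂ν)
    (hequiv : ∀ᵐ x ∂ν, (μx x).map (φ x) = μx (f x))
    (hB : 0 < ν {x : X | ∃ p : M, 0 < μx x {p}}) :
    ∃ (k : ℕ) (S : Set (X × M)), 1 ≤ k ∧ MeasurableSet S ∧ μ S = 1 ∧
      ∀ z ∈ S, {q : M | (z.1, q) ∈ S}.encard = k ∧
        ∀ q : M, (z.1, q) ∈ S → μx z.1 {q} = (k : ℝ≥0∞)⁻¹ := by
  classical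
  -- M is nonempty
  set B₀ : Set X := {x : X | ∃ p : M, 0 < μx x {p}} with hB₀
  have hB₀ne : B₀.Nonempty := by
    rcases B₀.eq_empty_or_nonempty with h | h
    · rw [h] at hB; simp at hB
    · exact h
  obtain ⟨xw, pw, -⟩ := hB₀ne
  haveI : Nonempty M := ⟨pw⟩
  have hfst : μ.fst = ν := hproj
  set κ := μ.condKernel with hκ
  -- a.e. identification of the disintegration
  have hae : ∀ᵐ x ∂ν, μx x = κ x := my_eq_condKernel ν μ hproj μx hμxprob hdisint
  -- the atom-mass function
  set g : X × M → ℝ≥0∞ := fun z => κ z.1 {z.2} with hg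
  have hgm : Measurable g := by
    have hD : MeasurableSet {w : (X × M) × M | w.2 = w.1.2} :=
      StronglyMeasurable.measurableSet_eq_fun
        (measurable_snd.stronglyMeasurable)
        ((measurable_snd.comp measurable_fst).stronglyMeasurable)
    set κ' : Kernel (X × M) M := κ.comap Prod.fst measurable_fst with hκ'
    have hmeas := Kernel.measurable_kernel_prodMk_left (κ := κ') hD
    have heq : (fun z : X × M => κ' z (Prod.mk z ⁻¹' {w : (X × M) × M | w.2 = w.1.2})) = g := by
      funext z
      have hpre : Prod.mk z ⁻¹' {w : (X × M) × M | w.2 = w.1.2} = {z.2} := by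
        ext q; simp [eq_comm]
      rw [hpre, hκ', Kernel.comap_apply]
    rwa [heq] at hmeas
  -- a.e. invariance of g under F
  have haef : ∀ᵐ x ∂ν, μx (f x) = κ (f x) := hf.quasiMeasurePreserving.ae hae
  have hP : ∀ᵐ x ∂ν, κ (f x) = (κ x).map (φ x) := by
    filter_upwards [hae, haef, hequiv] with x h1 h2 h3
    rw [← h2, ← h3, h1]
  obtain ⟨N, hNm, hN1, hNP⟩ := my_conull hP
  have hNμc : μ (Prod.fst ⁻¹' N)ᶜ = 0 := by
    rw [prob_compl_eq_zero_iff (measurable_fst hNm),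
      ← Measure.map_apply measurable_fst hNm, hproj]
    exact hN1
  have hginv : (g ∘ fun z : X × M => (f z.1, φ z.1 z.2)) =ᵐ[μ] g := by
    refine Filter.eventually_of_mem (MeasureTheory.mem_ae_iff.2 hNμc) fun z hz => ?_
    have hx : z.1 ∈ N := hz
    have hpre : φ z.1 ⁻¹' {φ z.1 z.2} = {z.2} := by
      rw [← Set.image_singleton, Set.preimage_image_eq _ (hφbij z.1).injective]
    show κ (f z.1) {φ z.1 z.2} = κ z.1 {z.2}
    rw [hNP z.1 hx, Measure.map_apply (hφcont z.1).measurable (measurableSet_singleton _),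
      hpre]
  -- g is a.e. constant
  obtain ⟨c, hgc⟩ := hFerg.ae_eq_const_of_ae_eq_comp₀ hgm.nullMeasurable hginv
  -- c is nonzero
  obtain ⟨N₁, hN₁m, hN₁1, hN₁⟩ := my_conull hae
  have hU : MeasurableSet {z : X × M | 0 < g z} :=
    measurableSet_lt measurable_const hgm
  have hUpos : 0 < μ {z : X × M | 0 < g z} := by
    have hint : μ {z : X × M | 0 < g z}
        = ∫⁻ x, κ x {p | (x, p) ∈ {z : X × M | 0 < g z}} ∂ν := by
      rw [← hfst]
      exact (Measure.lintegral_condKernel_mem hU).symm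
    have hXmeas : Measurable fun x => κ x {p | (x, p) ∈ {z : X × M | 0 < g z}} :=
      Kernel.measurable_kernel_prodMk_left hU
    have hsub : B₀ ∩ N₁ ⊆ Function.support fun x =>
        κ x {p | (x, p) ∈ {z : X × M | 0 < g z}} := by
      rintro x ⟨⟨p, hp⟩, hxN⟩
      have hp' : 0 < κ x {p} := by rwa [← hN₁ x hxN]
      have : ({p} : Set M) ⊆ {q | (x, q) ∈ {z : X × M | 0 < g z}} := by
        intro q hq
        rw [Set.mem_singleton_iff] at hq
        subst hq
        exact hp'
      have hle := measure_mono this (μ := κ x)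
      exact (hp'.trans_le hle).ne'
    have hB₀N₁ : 0 < ν (B₀ ∩ N₁) := by
      by_contra hle
      push_neg at hle
      have h0 : ν (B₀ ∩ N₁) = 0 := le_antisymm (by exact hle) (by simp)
      have : ν B₀ ≤ ν (B₀ ∩ N₁) + ν N₁ᶜ :=
        (measure_mono fun x hx => by
          by_cases hxN : x ∈ N₁
          · exact Or.inl ⟨hx, hxN⟩
          · exact Or.inr hxN).trans (measure_union_le _ _)
      have hN₁c : ν N₁ᶜ = 0 := (prob_compl_eq_zero_iff hN₁m).2 hN₁1
      rw [h0, hN₁c, add_zero] at this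
      exact absurd (hB.trans_le this) (lt_irrefl 0)
    rw [hint]
    rw [lintegral_pos_iff_support hXmeas]
    exact hB₀N₁.trans_le (measure_mono hsub)
  have hc0 : c ≠ 0 := by
    intro hc
    subst hc
    have h0 : μ {z : X × M | ¬ g z = Function.const (X × M) (0:ℝ≥0∞) z} = 0 := ae_iff.1 hgc
    have : μ {z : X × M | 0 < g z} = 0 :=
      measure_mono_null (fun z hz => hz.ne') h0
    exact hUpos.ne' this
  -- the level set of c has full measure
  have hgceq : MeasurableSet {z : X × M | g z = c} := by
    have : {z : X × M | g z = c} = g ⁻¹' {c} := rfl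
    rw [this]
    exact hgm (measurableSet_singleton c)
  have hgc1 : μ {z : X × M | g z = c} = 1 := by
    rw [← prob_compl_eq_zero_iff hgceq]
    exact ae_iff.1 hgc
  -- a.e. fiber gives full mass to atoms of mass c
  have hfib : ∀ᵐ x ∂ν, κ x {p : M | κ x {p} = c} = 1 := by
    set hY : X → ℝ≥0∞ := fun x => κ x {p | (x, p) ∈ {z : X × M | g z = c}} with hYdef
    have hYmeas : Measurable hY := Kernel.measurable_kernel_prodMk_left hgceq
    have hYle : ∀ x, hY x ≤ 1 := fun x => prob_le_one
    have hYint : ∫⁻ x, hY x ∂ν = 1 := by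
      have h := Measure.lintegral_condKernel_mem (ρ := μ) hgceq
      rw [hfst] at h
      rw [hYdef]
      exact h.trans hgc1
    have hsub0 : ∫⁻ x, ((fun _ => (1:ℝ≥0∞)) x - hY x) ∂ν = 0 := by
      rw [lintegral_sub hYmeas (by rw [hYint]; exact ENNReal.one_ne_top)
        (Filter.Eventually.of_forall hYle), hYint]
      simp
    have hae1 := (lintegral_eq_zero_iff (measurable_const.sub hYmeas)).1 hsub0
    filter_upwards [hae1] with x hx
    have h1le : 1 ≤ hY x := tsub_eq_zero_iff_le.1 hx
    have : hY x = 1 := le_antisymm (hYle x) h1le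
    exact this
  -- the good set
  obtain ⟨G, hGm, hG1, hGQ⟩ := my_conull (hae.and hfib)
  have hGne : G.Nonempty := by
    rcases G.eq_empty_or_nonempty with h | h
    · rw [h] at hG1; simp at hG1
    · exact h
  obtain ⟨x₀, hx₀⟩ := hGne
  obtain ⟨k, hkcard, hkc⟩ := my_count_atoms (κ x₀) hc0 (hGQ x₀ hx₀).2
  have hk0 : (k : ℝ≥0∞) ≠ 0 := by
    intro h
    rw [h, zero_mul] at hkc
    exact zero_ne_one hkc
  have hk1 : 1 ≤ k := Nat.one_le_iff_ne_zero.2 (by exact_mod_cast fun h => hk0 (by exact_mod_cast congrArg Nat.cast h))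
  have hctop : c ≠ ⊤ := by
    intro h
    rw [h, ENNReal.mul_top hk0] at hkc
    exact (ENNReal.top_ne_one) hkc
  have hcast : ∀ m : ℕ, (m : ℝ≥0∞) * c = 1 → (m : ℝ≥0∞) = c⁻¹ := by
    intro m hm
    have : (m : ℝ≥0∞) * c * c⁻¹ = 1 * c⁻¹ := by rw [hm]
    rwa [mul_assoc, ENNReal.mul_inv_cancel hc0 hctop, mul_one, one_mul] at this
  have hcinv : c = (k : ℝ≥0∞)⁻¹ := by
    rw [hcast k hkc, inv_inv]
  -- the set S
  refine ⟨k, (Prod.fst ⁻¹' G) ∩ {z : X × M | g z = c}, hk1,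
    (measurable_fst hGm).inter hgceq, ?_, ?_⟩
  · have hGμ : μ (Prod.fst ⁻¹' G) = 1 := by
      rw [← Measure.map_apply measurable_fst hGm, hproj]
      exact hG1
    have hcompl : μ ((Prod.fst ⁻¹' G) ∩ {z : X × M | g z = c})ᶜ = 0 := by
      rw [Set.compl_inter]
      refine measure_union_null ?_ ?_
      · rw [prob_compl_eq_zero_iff (measurable_fst hGm)]; exact hGμ
      · rw [prob_compl_eq_zero_iff hgceq]; exact hgc1
    rw [← prob_compl_eq_zero_iff ((measurable_fst hGm).inter hgceq)]
    exact hcompl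
  · rintro ⟨x, p⟩ hz
    obtain ⟨hxG, -⟩ := hz
    have hxG' : x ∈ G := hxG
    obtain ⟨hμxκ, hfibx⟩ := hGQ x hxG'
    have hfiber : {q : M | ((x, p).1, q) ∈ (Prod.fst ⁻¹' G) ∩ {z : X × M | g z = c}}
        = {q : M | κ x {q} = c} := by
      ext q
      simp only [Set.mem_inter_iff, Set.mem_preimage, Set.mem_setOf_eq]
      exact ⟨fun h => h.2, fun h => ⟨hxG', h⟩⟩
    constructor
    · rw [hfiber]
      obtain ⟨n, hncard, hnc⟩ := my_count_atoms (κ x) hc0 hfibx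
      have : (n : ℝ≥0∞) = (k : ℝ≥0∞) := by rw [hcast n hnc, hcast k hkc]
      have hnk : n = k := by exact_mod_cast this
      rw [hncard, hnk]
    · intro q hq
      have hqc : κ x {q} = c := hq.2
      rw [show (x, p).1 = x from rfl, hμxκ, hqc, hcinv]
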